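/- Let Γ be a countably infinite group with a finite symmetric generating set S and Cayley graph 𝒢. Let ε > 0, δ ∈ (0, 1/√2), and let K ⊆ Γ be a finite set containing a non-identity element, such that every normalized positive definite function φ : Γ → [0,1] with min_{g ∈ K} φ(g) ≥ 1 − δ²ε²/2 satisfies inf_{g ∈ Γ} φ(g) ≥ 1 − 2δ². Set d_K := max_{g ∈ K} |g|. Then for every Γ-invariant bond percolation P on 𝒢 with E[deg_ω(o)] > deg(o) − δ²ε²/(2·d_K), one has inf_{g,h ∈ Γ} τ(g,h) ≥ 1 − 2δ² > 0. -/

import Mathlib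

open MeasureTheory Filter
open scoped ComplexOrder symmDiff

namespace InvPerc

variable {Γ : Type*} [Group Γ]

/-- Percolation configurations: indicator functions on unordered pairs of vertices. -/
abbrev Config (Γ : Type*) := Sym2 Γ → Bool

/-- The edge set of the (right) Cayley graph of `Γ` with respect to `S`. -/
def IsCayleyEdge (S : Finset Γ) (e : Sym2 Γ) : Prop :=
  ∃ g : Γ, ∃ t ∈ S, e = s(g, g * t)

/-- The action of `Γ` on configurations induced by left multiplication:
`e ∈ shift γ ω ↔ γ⁻¹ • e ∈ ω`. -/
def shift (γ : Γ) (ω : Config Γ) : Config Γ :=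
  fun e => ω (Sym2.map (fun x => γ⁻¹ * x) e)

/-- `ConnBy ω u v n` : `u` and `v` are joined by a path of at most `n` open edges of `ω`. -/
def ConnBy (ω : Config Γ) (u v : Γ) (n : ℕ) : Prop :=
  ∃ l : List Γ, l.length ≤ n ∧ List.Chain (fun a b => ω s(a, b) = true) u l ∧
    (u :: l).getLast (List.cons_ne_nil u l) = v

/-- `u` and `v` lie in the same cluster of the configuration `ω` (`u ↔ v` in `ω`). -/
def Conn (ω : Config Γ) (u v : Γ) : Prop := ∃ n : ℕ, ConnBy ω u v n

/-- The two-point function `τ(u,v) = P[u ↔ v]`. -/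
noncomputable def tpf (P : Measure (Config Γ)) (u v : Γ) : ℝ :=
  (P {ω | Conn ω u v}).toReal

/-- A `Γ`-invariant bond percolation on the Cayley graph of `(Γ, S)`: a probability
measure on configurations, supported on subsets of the Cayley edge set, invariant under
the action induced by left multiplication. -/
structure IsInvBondPerc (S : Finset Γ) (P : Measure (Config Γ)) : Prop where
  prob : IsProbabilityMeasure P
  supported : P {ω | ∀ e : Sym2 Γ, ω e = true → IsCayleyEdge S e} = 1
  invariant : ∀ γ : Γ, P.map (shift γ) = P

/-- The expected degree of the origin, `E[deg_ω(o)] = ∑_{t ∈ S} P[{o, t} ∈ ω]`. -/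
noncomputable def expDeg (S : Finset Γ) (P : Measure (Config Γ)) : ℝ :=
  ∑ t ∈ S, (P {ω : Config Γ | ω s(1, t) = true}).toReal

/-- The word length of `g` with respect to the generating set `S`. -/
noncomputable def wlen (S : Finset Γ) (g : Γ) : ℕ :=
  sInf {n : ℕ | ∃ l : List Γ, (∀ x ∈ l, x ∈ S) ∧ l.prod = g ∧ l.length = n}

/-- The word metric `d(g,h) = |g⁻¹h|`. -/
noncomputable def wdist (S : Finset Γ) (g h : Γ) : ℕ := wlen S (g⁻¹ * h)

/-- The two-point function of `P` vanishes at infinity: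
`sup {τ(g,h) : d(g,h) > r} → 0` as `r → ∞`. -/
def TpfVanishes (S : Finset Γ) (P : Measure (Config Γ)) : Prop :=
  ∀ ε : ℝ, 0 < ε → ∃ r : ℕ, ∀ g h : Γ, r < wdist S g h → tpf P g h < ε

/-- `S` is a finite symmetric generating set not containing the identity. -/
def IsSymmGen (S : Finset Γ) : Prop :=
  (1 : Γ) ∉ S ∧ (∀ t ∈ S, t⁻¹ ∈ S) ∧
    ∀ g : Γ, ∃ l : List Γ, (∀ x ∈ l, x ∈ S) ∧ l.prod = g

/-- A positive definite function on `Γ`. -/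
def IsPosDef (φ : Γ → ℂ) : Prop :=
  ∀ (n : ℕ) (g : Fin n → Γ) (a : Fin n → ℂ),
    0 ≤ ∑ i : Fin n, ∑ j : Fin n, (starRingEnd ℂ) (a i) * a j * φ ((g i)⁻¹ * g j)

/-- A conditionally negative definite function on `Γ`. -/
def IsCondNegDef (ψ : Γ → ℝ) : Prop :=
  ψ 1 = 0 ∧ (∀ g : Γ, ψ g⁻¹ = ψ g) ∧
    ∀ (n : ℕ) (g : Fin n → Γ) (a : Fin n → ℝ), (∑ i : Fin n, a i) = 0 →
      ∑ i : Fin n, ∑ j : Fin n, a i * a j * ψ ((g i)⁻¹ * g j) ≤ 0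

end InvPerc

namespace InvPerc

set_option linter.unusedSectionVars false
section Aux
variable {Γ : Type*} [Group Γ]

lemma er_symm (ω : Config Γ) {a b : Γ} (h : ω s(a,b) = true) : ω s(b,a) = true := by
  rwa [Sym2.eq_swap]

lemma conn_iff_rtg (ω : Config Γ) (u v : Γ) :
    Conn ω u v ↔ Relation.ReflTransGen (fun a b => ω s(a,b) = true) u v := by
  constructor
  · rintro ⟨n, l, -, hc, hl⟩
    clear n
    induction l generalizing u with
    | nil => simp at hl; exact hl ▸ Relation.ReflTransGen.refl
    | cons b t ih =>
      rw [List.Chain, List.chain_cons] at hc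
      refine Relation.ReflTransGen.head hc.1 (ih b hc.2 ?_)
      rwa [List.getLast_cons (List.cons_ne_nil b t)] at hl
  · intro h
    induction h using Relation.ReflTransGen.head_induction_on with
    | refl => exact ⟨0, [], by simp [List.Chain]⟩
    | head hab _ ih =>
      obtain ⟨n, l, hlen, hc, hl⟩ := ih
      refine ⟨n + 1, _ :: l, by simpa using Nat.succ_le_succ hlen, List.chain_cons.2 ⟨hab, hc⟩, ?_⟩
      · rwa [List.getLast_cons (List.cons_ne_nil _ l)]

lemma conn_refl (ω : Config Γ) (u : Γ) : Conn ω u u :=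
  (conn_iff_rtg ω u u).2 Relation.ReflTransGen.refl

lemma conn_symm {ω : Config Γ} {u v : Γ} (h : Conn ω u v) : Conn ω v u := by
  rw [conn_iff_rtg] at h ⊢
  haveI : Std.Symm (fun a b : Γ => ω s(a,b) = true) := ⟨fun a b hab => er_symm ω hab⟩
  exact Std.Symm.symm _ _ h

lemma conn_trans {ω : Config Γ} {u v w : Γ} (h1 : Conn ω u v) (h2 : Conn ω v w) :
    Conn ω u w := by
  rw [conn_iff_rtg] at h1 h2 ⊢
  exact h1.trans h2

lemma shift_apply_pair (γ : Γ) (ω : Config Γ) (a b : Γ) :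
    shift γ ω s(a, b) = ω s(γ⁻¹ * a, γ⁻¹ * b) := rfl

lemma conn_shift (γ : Γ) (ω : Config Γ) (u v : Γ) :
    Conn (shift γ ω) u v ↔ Conn ω (γ⁻¹ * u) (γ⁻¹ * v) := by
  rw [conn_iff_rtg, conn_iff_rtg]
  constructor
  · intro h
    exact Relation.ReflTransGen.lift (fun x => γ⁻¹ * x) (fun a b hab => hab) _ _ h
  · intro h
    have key : ∀ a b : Γ, ω s(a, b) = true → shift γ ω s(γ * a, γ * b) = true := by
      intro a b hab
      rw [shift_apply_pair]; simpa using hab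
    have := Relation.ReflTransGen.lift (r := fun a b => ω s(a,b) = true)
      (p := fun a b => shift γ ω s(a,b) = true) (fun x => γ * x) (fun a b hab => key a b hab) _ _ h
    simpa [Function.onFun] using this

lemma conn_single {ω : Config Γ} {a b : Γ} (h : ω s(a,b) = true) : Conn ω a b :=
  (conn_iff_rtg ω a b).2 (Relation.ReflTransGen.single h)

end Aux

section Aux2
variable {Γ : Type*} [Group Γ]

lemma meas_edge (e : Sym2 Γ) (b : Bool) : MeasurableSet {ω : Config Γ | ω e = b} := by
  have : {ω : Config Γ | ω e = b} = (fun ω : Config Γ => ω e) ⁻¹' {b} := rfl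
  rw [this]
  exact measurable_pi_apply e (measurableSet_singleton b)

lemma meas_chain (u : Γ) (l : List Γ) :
    MeasurableSet {ω : Config Γ | List.Chain (fun a b => ω s(a,b) = true) u l} := by
  induction l generalizing u with
  | nil => simp [List.Chain]
  | cons b t ih =>
    have : {ω : Config Γ | List.Chain (fun a b => ω s(a,b) = true) u (b::t)}
        = {ω : Config Γ | ω s(u,b) = true} ∩
          {ω : Config Γ | List.Chain (fun a b => ω s(a,b) = true) b t} := by
      ext ω; simp [List.Chain, List.chain_cons]
    rw [this]; exact (meas_edge _ _).inter (ih b)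

lemma conn_iff_list (ω : Config Γ) (u v : Γ) :
    Conn ω u v ↔ ∃ l : List Γ, List.Chain (fun a b => ω s(a,b) = true) u l ∧
      (u :: l).getLast (List.cons_ne_nil u l) = v := by
  constructor
  · rintro ⟨n, l, -, hc, hl⟩; exact ⟨l, hc, hl⟩
  · rintro ⟨l, hc, hl⟩; exact ⟨l.length, l, le_refl _, hc, hl⟩

lemma meas_conn [Countable Γ] (u v : Γ) :
    MeasurableSet {ω : Config Γ | Conn ω u v} := by
  have : {ω : Config Γ | Conn ω u v} =
      ⋃ l : List Γ, ({ω : Config Γ | List.Chain (fun a b => ω s(a,b) = true) u l} ∩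
        {_ω : Config Γ | (u :: l).getLast (List.cons_ne_nil u l) = v}) := by
    ext ω; simp [conn_iff_list, Set.mem_iUnion]
  rw [this]
  exact MeasurableSet.iUnion fun l => (meas_chain u l).inter (MeasurableSet.const _)

lemma shift_measurable (γ : Γ) : Measurable (shift γ : Config Γ → Config Γ) :=
  measurable_pi_lambda _ (fun e => measurable_pi_apply _)

lemma tpf_inv [Countable Γ] {P : Measure (Config Γ)}
    (hinv : ∀ γ : Γ, P.map (shift γ) = P) (γ u v : Γ) :
    tpf P u v = tpf P (γ⁻¹ * u) (γ⁻¹ * v) := by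
  unfold tpf
  conv_lhs => rw [← hinv γ]
  rw [Measure.map_apply (shift_measurable γ) (meas_conn u v)]
  congr 2
  ext ω
  simpa [Set.mem_preimage] using conn_shift γ ω u v

lemma tpf_symm (P : Measure (Config Γ)) (u v : Γ) : tpf P u v = tpf P v u := by
  unfold tpf
  congr 2
  ext ω
  exact ⟨fun h => conn_symm h, fun h => conn_symm h⟩

lemma tpf_nonneg (P : Measure (Config Γ)) (u v : Γ) : 0 ≤ tpf P u v :=
  ENNReal.toReal_nonneg

lemma tpf_le_one (P : Measure (Config Γ)) [IsProbabilityMeasure P] (u v : Γ) :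
    tpf P u v ≤ 1 := by
  have h := prob_le_one (μ := P) (s := {ω | Conn ω u v})
  simpa [tpf] using ENNReal.toReal_mono ENNReal.one_ne_top h

lemma tpf_self (P : Measure (Config Γ)) [IsProbabilityMeasure P] (u : Γ) :
    tpf P u u = 1 := by
  have : {ω : Config Γ | Conn ω u u} = Set.univ := by
    ext ω; simp [conn_refl]
  simp [tpf, this]

end Aux2

section Aux3
variable {Γ : Type*} [Group Γ]

open scoped Classical in
lemma sum_nonneg_of_equiv {n : ℕ} (R : Fin n → Fin n → Prop)
    (hrefl : ∀ i, R i i) (hsymm : ∀ {i j}, R i j → R j i)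
    (htrans : ∀ {i j k}, R i j → R j k → R i k) (x : Fin n → ℝ) :
    0 ≤ ∑ i : Fin n, ∑ j : Fin n, (if R i j then x i * x j else 0) := by
  classical
  have hne : ∀ i, (Finset.univ.filter (fun j => R i j)).Nonempty :=
    fun i => ⟨i, Finset.mem_filter.2 ⟨Finset.mem_univ i, hrefl i⟩⟩
  set r : Fin n → Fin n := fun i => (Finset.univ.filter (fun j => R i j)).min' (hne i) with hr
  have hrmem : ∀ i, R i (r i) := fun i =>
    (Finset.mem_filter.1 ((Finset.univ.filter (fun j => R i j)).min'_mem (hne i))).2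
  have hkey : ∀ i j, R i j ↔ r i = r j := by
    intro i j
    constructor
    · intro h
      have hset : Finset.univ.filter (fun k => R i k) = Finset.univ.filter (fun k => R j k) := by
        ext k
        simp only [Finset.mem_filter, Finset.mem_univ, true_and]
        exact ⟨fun hik => htrans (hsymm h) hik, fun hjk => htrans h hjk⟩
      show (Finset.univ.filter (fun k => R i k)).min' (hne i)
          = (Finset.univ.filter (fun k => R j k)).min' (hne j)
      congr 1
    · intro h
      have h1 : R i (r j) := h ▸ hrmem i
      exact htrans h1 (hsymm (hrmem j))
  have hterm : ∀ i j : Fin n, (if R i j then x i * x j else 0)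
      = ∑ c : Fin n, (if r i = c then x i else 0) * (if r j = c then x j else 0) := by
    intro i j
    have h1 : ∀ c : Fin n, (if r i = c then x i else 0) * (if r j = c then x j else 0)
        = if r i = c then (if r j = c then x i * x j else 0) else 0 := by
      intro c; split_ifs <;> ring
    rw [Finset.sum_congr rfl (fun c _ => h1 c), Finset.sum_ite_eq]
    simp only [Finset.mem_univ, if_true]
    by_cases h : R i j
    · have := (hkey i j).1 h
      simp [h, this]
    · have : ¬ (r j = r i) := fun hh => h ((hkey i j).2 hh.symm)
      simp [h, this]
  calc (0:ℝ) ≤ ∑ c : Fin n, (∑ i : Fin n, (if r i = c then x i else 0))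
        * (∑ j : Fin n, (if r j = c then x j else 0)) := by
        exact Finset.sum_nonneg fun c _ => mul_self_nonneg _
    _ = ∑ c : Fin n, ∑ i : Fin n, ∑ j : Fin n,
          (if r i = c then x i else 0) * (if r j = c then x j else 0) := by
        refine Finset.sum_congr rfl fun c _ => ?_
        rw [Finset.sum_mul_sum]
    _ = ∑ i : Fin n, ∑ j : Fin n, ∑ c : Fin n,
          (if r i = c then x i else 0) * (if r j = c then x j else 0) := by
        rw [Finset.sum_comm]
        exact Finset.sum_congr rfl fun i _ => Finset.sum_comm
    _ = ∑ i : Fin n, ∑ j : Fin n, (if R i j then x i * x j else 0) := by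
        exact Finset.sum_congr rfl fun i _ => Finset.sum_congr rfl fun j _ => (hterm i j).symm

lemma tpf_posdef_real [Countable Γ] (P : Measure (Config Γ)) [IsProbabilityMeasure P]
    {n : ℕ} (g : Fin n → Γ) (x : Fin n → ℝ) :
    0 ≤ ∑ i : Fin n, ∑ j : Fin n, x i * x j * tpf P (g i) (g j) := by
  classical
  set F : Fin n → Fin n → Config Γ → ℝ :=
    fun i j => Set.indicator {ω : Config Γ | Conn ω (g i) (g j)} (fun _ => x i * x j) with hF
  have hmeas : ∀ i j : Fin n, MeasurableSet {ω : Config Γ | Conn ω (g i) (g j)} :=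
    fun i j => meas_conn _ _
  have hint : ∀ i j : Fin n, Integrable (F i j) P :=
    fun i j => (integrable_const _).indicator (hmeas i j)
  have h1 : ∀ i j : Fin n, x i * x j * tpf P (g i) (g j) = ∫ ω, F i j ω ∂P := by
    intro i j
    rw [hF]
    rw [MeasureTheory.integral_indicator_const (x i * x j) (hmeas i j)]
    simp [tpf, mul_comm, Measure.real]
  have h2 : ∑ i : Fin n, ∑ j : Fin n, x i * x j * tpf P (g i) (g j)
      = ∫ ω, ∑ i : Fin n, ∑ j : Fin n, F i j ω ∂P := by
    rw [integral_finset_sum _ (fun i _ => integrable_finset_sum _ (fun j _ => hint i j))]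
    refine Finset.sum_congr rfl fun i _ => ?_
    rw [integral_finset_sum _ (fun j _ => hint i j)]
    exact Finset.sum_congr rfl fun j _ => h1 i j
  rw [h2]
  refine integral_nonneg fun ω => ?_
  have h3 : ∀ i j : Fin n, F i j ω = if Conn ω (g i) (g j) then x i * x j else 0 := by
    intro i j
    rw [hF]
    simp [Set.indicator_apply]
  simp only [h3]
  exact sum_nonneg_of_equiv (fun i j => Conn ω (g i) (g j)) (fun i => conn_refl ω (g i))
    (fun h => conn_symm h) (fun h1 h2 => conn_trans h1 h2) x

lemma tpf_posdef [Countable Γ] {P : Measure (Config Γ)} [IsProbabilityMeasure P]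
    (hinv : ∀ γ : Γ, P.map (shift γ) = P) :
    IsPosDef (fun g : Γ => ((tpf P 1 g : ℝ) : ℂ)) := by
  intro n g a
  have hphi : ∀ i j : Fin n, tpf P 1 ((g i)⁻¹ * g j) = tpf P (g i) (g j) := by
    intro i j
    have h := tpf_inv hinv (g i) (g i) (g j)
    rw [h]
    simp
  simp only [hphi]
  rw [Complex.le_def]
  constructor
  · simp only [Complex.zero_re, Complex.re_sum]
    have hre : ∀ i j : Fin n,
        ((starRingEnd ℂ) (a i) * a j * ((tpf P (g i) (g j) : ℝ) : ℂ)).re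
        = (a i).re * (a j).re * tpf P (g i) (g j)
          + (a i).im * (a j).im * tpf P (g i) (g j) := by
      intro i j
      simp only [Complex.mul_re, Complex.mul_im, Complex.ofReal_re, Complex.ofReal_im,
        Complex.conj_re, Complex.conj_im]
      ring
    calc (0:ℝ) ≤ (∑ i : Fin n, ∑ j : Fin n, (a i).re * (a j).re * tpf P (g i) (g j))
          + (∑ i : Fin n, ∑ j : Fin n, (a i).im * (a j).im * tpf P (g i) (g j)) :=
        add_nonneg (tpf_posdef_real P g _) (tpf_posdef_real P g _)
      _ = ∑ i : Fin n, ∑ j : Fin n,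
            ((a i).re * (a j).re * tpf P (g i) (g j)
              + (a i).im * (a j).im * tpf P (g i) (g j)) := by
          rw [← Finset.sum_add_distrib]
          exact Finset.sum_congr rfl fun i _ => (Finset.sum_add_distrib).symm
      _ = ∑ i : Fin n, (∑ j : Fin n,
            ((starRingEnd ℂ) (a i) * a j * ((tpf P (g i) (g j) : ℝ) : ℂ)).re) := by
          exact Finset.sum_congr rfl fun i _ => Finset.sum_congr rfl fun j _ => (hre i j).symm
  · simp only [Complex.zero_im, Complex.im_sum]
    have him : ∀ i j : Fin n,
        ((starRingEnd ℂ) (a i) * a j * ((tpf P (g i) (g j) : ℝ) : ℂ)).im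
        = ((a i).re * (a j).im - (a i).im * (a j).re) * tpf P (g i) (g j) := by
      intro i j
      simp only [Complex.mul_re, Complex.mul_im, Complex.ofReal_re, Complex.ofReal_im,
        Complex.conj_re, Complex.conj_im]
      ring
    set f : Fin n → Fin n → ℝ :=
      fun i j => ((a i).re * (a j).im - (a i).im * (a j).re) * tpf P (g i) (g j) with hf
    have hT : (∑ i : Fin n, ∑ j : Fin n, f i j) = -(∑ i : Fin n, ∑ j : Fin n, f i j) := by
      conv_lhs => rw [Finset.sum_comm]
      rw [show -(∑ i : Fin n, ∑ j : Fin n, f i j)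
          = ∑ i : Fin n, ∑ j : Fin n, -(f i j) by simp]
      refine Finset.sum_congr rfl fun i _ => Finset.sum_congr rfl fun j _ => ?_
      show f j i = -(f i j)
      rw [hf]
      simp only
      rw [tpf_symm P (g j) (g i)]
      ring
    have hT0 : (∑ i : Fin n, ∑ j : Fin n, f i j) = 0 := by linarith
    calc (0:ℝ) = ∑ i : Fin n, ∑ j : Fin n, f i j := hT0.symm
      _ = ∑ i : Fin n, ∑ j : Fin n,
            ((starRingEnd ℂ) (a i) * a j * ((tpf P (g i) (g j) : ℝ) : ℂ)).im := by
          exact Finset.sum_congr rfl fun i _ => Finset.sum_congr rfl fun j _ => (him i j).symm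

end Aux3

section Aux4
variable {Γ : Type*} [Group Γ]

lemma edge_closed_inv [Countable Γ] {P : Measure (Config Γ)}
    (hinv : ∀ γ : Γ, P.map (shift γ) = P) (g t : Γ) :
    P {ω : Config Γ | ω s(g, g * t) = false} = P {ω : Config Γ | ω s(1, t) = false} := by
  conv_rhs => rw [← hinv g⁻¹]
  rw [Measure.map_apply (shift_measurable _) (meas_edge _ _)]
  congr 1
  ext ω
  simp only [Set.mem_preimage, Set.mem_setOf_eq, shift_apply_pair, inv_inv, mul_one]

lemma toReal_compl_prob {X : Type*} [MeasurableSpace X] (P : Measure X)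
    [IsProbabilityMeasure P] {A : Set X} (hA : MeasurableSet A) :
    (P Aᶜ).toReal = 1 - (P A).toReal := by
  rw [prob_compl_eq_one_sub hA,
    ENNReal.toReal_sub_of_le prob_le_one ENNReal.one_ne_top, ENNReal.toReal_one]

lemma edge_closed_small {S : Finset Γ} {P : Measure (Config Γ)} [IsProbabilityMeasure P]
    {t : Γ} (ht : t ∈ S) :
    (P {ω : Config Γ | ω s(1, t) = false}).toReal ≤ (S.card : ℝ) - expDeg S P := by
  have hcompl : {ω : Config Γ | ω s(1, t) = false}
      = {ω : Config Γ | ω s(1, t) = true}ᶜ := by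
    ext ω; simp
  rw [hcompl, toReal_compl_prob P (meas_edge _ _)]
  have hexp : (S.card : ℝ) - expDeg S P
      = ∑ u ∈ S, (1 - (P {ω : Config Γ | ω s(1, u) = true}).toReal) := by
    rw [Finset.sum_sub_distrib, expDeg]
    simp
  rw [hexp]
  refine Finset.single_le_sum (f := fun u => 1 - (P {ω : Config Γ | ω s(1, u) = true}).toReal)
    (fun u _ => ?_) ht
  have := prob_le_one (μ := P) (s := {ω : Config Γ | ω s(1, u) = true})
  have := ENNReal.toReal_mono ENNReal.one_ne_top this
  simp only [ENNReal.toReal_one] at this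
  show (0:ℝ) ≤ 1 - (P {ω : Config Γ | ω s(1, u) = true}).toReal
  linarith

lemma conn_of_open_path (ω : Config Γ) :
    ∀ (l : List Γ) (a : Γ),
      (∀ k (_ : k < l.length),
        ω s(a * (l.take k).prod, a * (l.take (k+1)).prod) = true) →
      Conn ω a (a * l.prod) := by
  intro l
  induction l with
  | nil => intro a _; simpa using conn_refl ω a
  | cons t l' ih =>
    intro a H
    have h0 : ω s(a, a * t) = true := by
      have := H 0 (by simp)
      simpa using this
    have hrec : Conn ω (a * t) (a * t * l'.prod) := by
      refine ih (a * t) (fun k hk => ?_)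
      have := H (k+1) (by simpa using Nat.succ_lt_succ hk)
      simpa [List.take_cons, mul_assoc] using this
    have : Conn ω a (a * t * l'.prod) := conn_trans (conn_single h0) hrec
    simpa [mul_assoc] using this

lemma tpf_one_ge [Countable Γ] {S : Finset Γ} {P : Measure (Config Γ)}
    (hP : IsInvBondPerc S P) (l : List Γ) (hl : ∀ x ∈ l, x ∈ S) :
    1 - (l.length : ℝ) * ((S.card : ℝ) - expDeg S P) ≤ tpf P 1 l.prod := by
  haveI := hP.prob
  set A : Set (Config Γ) := {ω | Conn ω 1 l.prod} with hA
  have hAm : MeasurableSet A := meas_conn _ _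
  set E : ℕ → Set (Config Γ) :=
    fun k => {ω | ω s((l.take k).prod, (l.take (k+1)).prod) = false} with hE
  have hsub : Aᶜ ⊆ ⋃ k ∈ Finset.range l.length, E k := by
    intro ω hω
    by_contra hcon
    apply hω
    have hnotE : ∀ k, k < l.length → ω ∉ E k := fun k hk hmem =>
      hcon (Set.mem_biUnion (Finset.mem_range.2 hk) hmem)
    have hopen : ∀ k (hk : k < l.length),
        ω s((1:Γ) * (l.take k).prod, (1:Γ) * (l.take (k+1)).prod) = true := by
      intro k hk
      have h2 := hnotE k hk
      simp only [hE, Set.mem_setOf_eq, Bool.not_eq_false] at h2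
      simpa using h2
    have := conn_of_open_path ω l 1 hopen
    simpa [hA] using this
  have hmb : P Aᶜ ≤ ∑ k ∈ Finset.range l.length, P (E k) :=
    le_trans (measure_mono hsub) (measure_biUnion_finset_le _ _)
  have hEsmall : ∀ k ∈ Finset.range l.length,
      (P (E k)).toReal ≤ (S.card : ℝ) - expDeg S P := by
    intro k hk
    have hk' : k < l.length := Finset.mem_range.1 hk
    have hprod : (l.take (k+1)).prod = (l.take k).prod * l.get ⟨k, hk'⟩ :=
      List.prod_take_succ l k hk'
    have hPE : P (E k) = P {ω : Config Γ | ω s(1, l.get ⟨k, hk'⟩) = false} := by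
      rw [hE]
      simp only [hprod]
      exact edge_closed_inv hP.invariant _ _
    rw [hPE]
    exact edge_closed_small (hl _ (l.get_mem _))
  have htr : (P Aᶜ).toReal ≤ (l.length : ℝ) * ((S.card : ℝ) - expDeg S P) := by
    have hfin : ∀ k ∈ Finset.range l.length, P (E k) ≠ ⊤ := fun k _ => measure_ne_top P _
    have h1 : (P Aᶜ).toReal ≤ (∑ k ∈ Finset.range l.length, P (E k)).toReal :=
      ENNReal.toReal_mono (by
        rw [← lt_top_iff_ne_top]
        exact ENNReal.sum_lt_top.2 fun k hk => lt_top_iff_ne_top.2 (hfin k hk)) hmb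
    rw [ENNReal.toReal_sum hfin] at h1
    refine le_trans h1 ?_
    calc ∑ k ∈ Finset.range l.length, (P (E k)).toReal
        ≤ ∑ _k ∈ Finset.range l.length, ((S.card : ℝ) - expDeg S P) :=
          Finset.sum_le_sum hEsmall
      _ = (l.length : ℝ) * ((S.card : ℝ) - expDeg S P) := by
          simp [mul_comm]
          ring
  have hcompl := toReal_compl_prob P hAm
  have : tpf P 1 l.prod = (P A).toReal := rfl
  rw [this]
  linarith

lemma wlen_spec {S : Finset Γ} (hS : IsSymmGen S) (g : Γ) :
    ∃ l : List Γ, (∀ x ∈ l, x ∈ S) ∧ l.prod = g ∧ l.length = wlen S g := by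
  have hne : {n : ℕ | ∃ l : List Γ, (∀ x ∈ l, x ∈ S) ∧ l.prod = g ∧ l.length = n}.Nonempty := by
    obtain ⟨l, hlS, hlp⟩ := hS.2.2 g
    exact ⟨l.length, l, hlS, hlp, rfl⟩
  exact Nat.sInf_mem hne

lemma wlen_pos {S : Finset Γ} (hS : IsSymmGen S) {g : Γ} (hg : g ≠ 1) :
    1 ≤ wlen S g := by
  by_contra h
  push_neg at h
  interval_cases hw : wlen S g
  obtain ⟨l, _, hlp, hll⟩ := wlen_spec hS g
  rw [hw] at hll
  rw [List.length_eq_zero_iff.1 hll] at hlp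
  exact hg (hlp.symm ▸ rfl)

end Aux4

/-- quantitative threshold for Kazhdan groups. Given `ε > 0`,
`δ ∈ (0, 1/√2)` and a finite set `K` (containing a non-identity element) such that every
normalized positive definite `φ : Γ → [0,1]` with `min_{g ∈ K} φ(g) ≥ 1 - δ²ε²/2` satisfies
`inf_g φ(g) ≥ 1 - 2δ²`, every `Γ`-invariant bond percolation with
`E[deg_ω(o)] > deg(o) - δ²ε²/(2·d_K)` has `inf_{g,h} τ(g,h) ≥ 1 - 2δ² > 0`. -/
theorem kazhdan_quantitative_threshold {Γ : Type*} [Group Γ] [Countable Γ] [Infinite Γ]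
    (S : Finset Γ) (hS : IsSymmGen S)
    (ε : ℝ) (hε : 0 < ε) (δ : ℝ) (hδ0 : 0 < δ) (hδ1 : δ < 1 / Real.sqrt 2)
    (K : Finset Γ) (hK : ∃ g ∈ K, g ≠ 1)
    (hpair : ∀ φ : Γ → ℝ,
      (∀ g : Γ, 0 ≤ φ g ∧ φ g ≤ 1) → φ 1 = 1 → IsPosDef (fun g => (φ g : ℂ)) →
      (∀ g ∈ K, 1 - δ ^ 2 * ε ^ 2 / 2 ≤ φ g) →
      (∀ g : Γ, 1 - 2 * δ ^ 2 ≤ φ g))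
    (dK : ℕ) (hdK : dK = K.sup (wlen S))
    (P : Measure (Config Γ)) (hP : IsInvBondPerc S P)
    (hdeg : expDeg S P > (S.card : ℝ) - δ ^ 2 * ε ^ 2 / (2 * (dK : ℝ))) :
    (∀ g h : Γ, 1 - 2 * δ ^ 2 ≤ tpf P g h) ∧ 0 < 1 - 2 * δ ^ 2 := by
  haveI := hP.prob
  set η : ℝ := (S.card : ℝ) - expDeg S P with hηdef
  have hηlt : η < δ ^ 2 * ε ^ 2 / (2 * (dK : ℝ)) := by
    rw [hηdef]; linarith [hdeg]
  have hexp_le : expDeg S P ≤ (S.card : ℝ) := by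
    rw [expDeg]
    calc ∑ t ∈ S, (P {ω : Config Γ | ω s(1, t) = true}).toReal
        ≤ ∑ _t ∈ S, (1 : ℝ) := by
          refine Finset.sum_le_sum fun t _ => ?_
          have := prob_le_one (μ := P) (s := {ω : Config Γ | ω s(1, t) = true})
          have := ENNReal.toReal_mono ENNReal.one_ne_top this
          simpa using this
      _ = (S.card : ℝ) := by simp
  have hη0 : 0 ≤ η := by rw [hηdef]; linarith
  obtain ⟨g0, hg0K, hg0⟩ := hK
  have hdK1 : 1 ≤ dK := by
    rw [hdK]
    exact le_trans (wlen_pos hS hg0) (Finset.le_sup hg0K)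
  have hdKpos : (0:ℝ) < (dK : ℝ) := by exact_mod_cast hdK1
  set φ : Γ → ℝ := fun g => tpf P 1 g with hφdef
  have hKbound : ∀ g ∈ K, 1 - δ ^ 2 * ε ^ 2 / 2 ≤ φ g := by
    intro g hg
    obtain ⟨l, hlS, hlprod, hllen⟩ := wlen_spec hS g
    have hlen_le : l.length ≤ dK := by
      rw [hllen, hdK]; exact Finset.le_sup hg
    have h1 := tpf_one_ge hP l hlS
    have h2 : (l.length : ℝ) * η ≤ (dK : ℝ) * η :=
      mul_le_mul_of_nonneg_right (by exact_mod_cast hlen_le) hη0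
    have h3 : (dK : ℝ) * η ≤ δ ^ 2 * ε ^ 2 / 2 := by
      calc (dK : ℝ) * η ≤ (dK : ℝ) * (δ ^ 2 * ε ^ 2 / (2 * (dK : ℝ))) :=
            mul_le_mul_of_nonneg_left (le_of_lt hηlt) (le_of_lt hdKpos)
        _ = δ ^ 2 * ε ^ 2 / 2 := by
            field_simp
    have hφg : φ g = tpf P 1 l.prod := by rw [hφdef, hlprod]
    rw [hφg]
    calc (1:ℝ) - δ ^ 2 * ε ^ 2 / 2 ≤ 1 - (l.length : ℝ) * η :=
          sub_le_sub_left (h2.trans h3) 1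
      _ ≤ tpf P 1 l.prod := by
          rw [hηdef] at *
          exact h1
  have h01 : ∀ g : Γ, 0 ≤ φ g ∧ φ g ≤ 1 := fun g => ⟨tpf_nonneg P 1 g, tpf_le_one P 1 g⟩
  have hφ1 : φ 1 = 1 := tpf_self P 1
  have hpd : IsPosDef (fun g => ((φ g : ℝ) : ℂ)) := tpf_posdef hP.invariant
  have hall := hpair φ h01 hφ1 hpd hKbound
  have hδ2 : 0 < 1 - 2 * δ ^ 2 := by
    have hs2 : (0:ℝ) < Real.sqrt 2 := by positivity
    have h4 : δ * Real.sqrt 2 < 1 := by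
      rw [← lt_div_iff₀ hs2] at *
      simpa [one_div] using hδ1
    have h5 : Real.sqrt 2 * Real.sqrt 2 = 2 := Real.mul_self_sqrt (by norm_num)
    nlinarith [hδ0, h4, h5, Real.sqrt_nonneg 2]
  refine ⟨fun g h => ?_, hδ2⟩
  have hgh : tpf P g h = φ (g⁻¹ * h) := by
    rw [hφdef]
    have := tpf_inv hP.invariant g g h
    simpa using this
  rw [hgh]
  exact hall _


end InvPerc
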